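/- Let 𝒜 be an abelian category with short exact sequences S : 0 → A' → A → A'' → 0 and T : 0 → B' → B → B'' → 0, with extension classes [S] ∈ Ext¹_𝒜(A'', A') and [T] ∈ Ext¹_𝒜(B'', B'), and let f' : A' → B' and f'' : A'' → B'' be morphisms. Then a glueing f : A → B of (f', f'') exists if and only if f'_*[S] = (f'')^*[T] in Ext¹_𝒜(A'', B'), where f'_* denotes pushforward (composition with the degree-0 class of f') and (f'')^* denotes pullback (precomposition with the degree-0 class of f''). -/

import Mathlib

open CategoryTheory Limits Abelian
open CategoryTheory.Category Pretriangulated DerivedCategory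

universe w v u

namespace GlueAux

open CategoryTheory.Category Pretriangulated DerivedCategory

variable {C : Type u} [Category.{v} C] [Abelian C] [HasDerivedCategory.{w} C]

omit [HasDerivedCategory.{w} C] in
lemma map_descShortComplex {S T : ShortComplex (CochainComplex C ℤ)}
    (α₁ : S.X₁ ⟶ T.X₁) (α₂ : S.X₂ ⟶ T.X₂) (α₃ : S.X₃ ⟶ T.X₃)
    (comm₁ : S.f ≫ α₂ = α₁ ≫ T.f) (comm₂ : S.g ≫ α₃ = α₂ ≫ T.g) :
    CochainComplex.mappingCone.map S.f T.f α₁ α₂ comm₁ ≫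
      CochainComplex.mappingCone.descShortComplex T =
    CochainComplex.mappingCone.descShortComplex S ≫ α₃ := by
  ext n
  have h := HomologicalComplex.congr_hom comm₂ n
  simp only [HomologicalComplex.comp_f] at h
  simp [CochainComplex.mappingCone.ext_from_iff _ (n + 1) n rfl,
    CochainComplex.mappingCone.map, h]

lemma triangleOfSESδ_naturality {S T : ShortComplex (CochainComplex C ℤ)}
    (hS : S.ShortExact) (hT : T.ShortExact)
    (α₁ : S.X₁ ⟶ T.X₁) (α₂ : S.X₂ ⟶ T.X₂) (α₃ : S.X₃ ⟶ T.X₃)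
    (comm₁ : S.f ≫ α₂ = α₁ ≫ T.f) (comm₂ : S.g ≫ α₃ = α₂ ≫ T.g) :
    triangleOfSESδ hS ≫ (Q.map α₁)⟦(1 : ℤ)⟧' = Q.map α₃ ≫ triangleOfSESδ hT := by
  have := CochainComplex.mappingCone.quasiIso_descShortComplex hS
  have := CochainComplex.mappingCone.quasiIso_descShortComplex hT
  set m := CochainComplex.mappingCone.map S.f T.f α₁ α₂ comm₁ with hm
  have h₁ : inv (Q.map (CochainComplex.mappingCone.descShortComplex S)) ≫ Q.map m =
      Q.map α₃ ≫ inv (Q.map (CochainComplex.mappingCone.descShortComplex T)) := by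
    rw [IsIso.inv_comp_eq, ← assoc, IsIso.eq_comp_inv, ← Q.map_comp, ← Q.map_comp,
      map_descShortComplex α₁ α₂ α₃ comm₁ comm₂]
  have h₂ : (CochainComplex.mappingCone.triangle S.f).mor₃ ≫ α₁⟦(1 : ℤ)⟧' =
      m ≫ (CochainComplex.mappingCone.triangle T.f).mor₃ :=
    (CochainComplex.mappingCone.triangleMap S.f T.f α₁ α₂ comm₁).comm₃
  have h₃ : (Q.commShiftIso (1 : ℤ)).hom.app S.X₁ ≫ (Q.map α₁)⟦(1 : ℤ)⟧' =
      Q.map (α₁⟦(1 : ℤ)⟧') ≫ (Q.commShiftIso (1 : ℤ)).hom.app T.X₁ :=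
    ((Q.commShiftIso (1 : ℤ)).hom.naturality α₁).symm
  dsimp only [triangleOfSESδ]
  erw [assoc, assoc, h₃, ← Q.map_comp_assoc, h₂, Q.map_comp_assoc, ← assoc, h₁, assoc]
  rfl

lemma singleδ_naturality {S T : ShortComplex C} (hS : S.ShortExact) (hT : T.ShortExact)
    (f' : S.X₁ ⟶ T.X₁) (f : S.X₂ ⟶ T.X₂) (f'' : S.X₃ ⟶ T.X₃)
    (comm₁ : S.f ≫ f = f' ≫ T.f) (comm₂ : S.g ≫ f'' = f ≫ T.g) :
    hS.singleδ ≫ ((singleFunctor C 0).map f')⟦(1 : ℤ)⟧' =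
      (singleFunctor C 0).map f'' ≫ hT.singleδ := by
  let F := HomologicalComplex.single C (ComplexShape.up ℤ) 0
  let e : singleFunctor C 0 ≅ CochainComplex.singleFunctor C 0 ⋙ Q :=
    (SingleFunctors.evaluation _ _ 0).mapIso (singleFunctorsPostcompQIso C)
  have key := triangleOfSESδ_naturality (hS.map_of_exact F) (hT.map_of_exact F)
      (F.map f') (F.map f) (F.map f'')
      (by show F.map S.f ≫ F.map f = F.map f' ≫ F.map T.f; rw [← Functor.map_comp, ← Functor.map_comp, comm₁])
      (by show F.map S.g ≫ F.map f'' = F.map f ≫ F.map T.g; rw [← Functor.map_comp, ← Functor.map_comp, comm₂])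
  have hinv : e.inv.app S.X₁ ≫ (singleFunctor C 0).map f' =
      Q.map (F.map f') ≫ e.inv.app T.X₁ := (e.inv.naturality f').symm
  have hhom : e.hom.app S.X₃ ≫ Q.map (F.map f'') =
      (singleFunctor C 0).map f'' ≫ e.hom.app T.X₃ := (e.hom.naturality f'').symm
  have gen : ∀ (δS : (CochainComplex.singleFunctor C 0 ⋙ Q).obj S.X₃ ⟶
      ((CochainComplex.singleFunctor C 0 ⋙ Q).obj S.X₁)⟦(1 : ℤ)⟧)
      (δT : (CochainComplex.singleFunctor C 0 ⋙ Q).obj T.X₃ ⟶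
      ((CochainComplex.singleFunctor C 0 ⋙ Q).obj T.X₁)⟦(1 : ℤ)⟧)
      (φ' : (CochainComplex.singleFunctor C 0 ⋙ Q).obj S.X₁ ⟶
        (CochainComplex.singleFunctor C 0 ⋙ Q).obj T.X₁)
      (φ'' : (CochainComplex.singleFunctor C 0 ⋙ Q).obj S.X₃ ⟶
        (CochainComplex.singleFunctor C 0 ⋙ Q).obj T.X₃),
      δS ≫ φ'⟦(1 : ℤ)⟧' = φ'' ≫ δT →
      e.inv.app S.X₁ ≫ (singleFunctor C 0).map f' = φ' ≫ e.inv.app T.X₁ →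
      e.hom.app S.X₃ ≫ φ'' = (singleFunctor C 0).map f'' ≫ e.hom.app T.X₃ →
      (e.hom.app S.X₃ ≫ δS ≫ (e.inv.app S.X₁)⟦(1 : ℤ)⟧') ≫
      ((singleFunctor C 0).map f')⟦(1 : ℤ)⟧' =
      (singleFunctor C 0).map f'' ≫
        (e.hom.app T.X₃ ≫ δT ≫ (e.inv.app T.X₁)⟦(1 : ℤ)⟧') := by
    intro δS δT φ' φ'' key hinv hhom
    rw [assoc, assoc, ← Functor.map_comp, hinv, Functor.map_comp, ← assoc δS,
      key]
    simp only [← assoc]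
    rw [hhom]
  exact gen _ _ _ _ key hinv hhom

/-- The natural isomorphism `singleFunctor C 0 ⋙ homologyFunctor C 0 ≅ 𝟭 C`. -/
noncomputable def singleCompHomologyIso :
    singleFunctor C 0 ⋙ homologyFunctor C 0 ≅ 𝟭 C :=
  Functor.isoWhiskerRight ((SingleFunctors.evaluation _ _ 0).mapIso (singleFunctorsPostcompQIso C))
      (homologyFunctor C 0) ≪≫ Functor.associator _ _ _ ≪≫
    Functor.isoWhiskerLeft (CochainComplex.singleFunctor C 0) (homologyFunctorFactors C 0) ≪≫
    HomologicalComplex.homologyFunctorSingleIso C (ComplexShape.up ℤ) 0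

end GlueAux

/-- Lemma D.1.1 (1): given short exact sequences `S` and `T` and morphisms `f'`, `f''` on
the outer terms, a glueing `f` exists iff the pushforward of the extension class of `S`
along `f'` equals the pullback of the extension class of `T` along `f''` in `Ext¹`. -/
theorem stmt_8 {C : Type u} [Category.{v} C] [Abelian C] [HasExt.{w} C]
    (S T : ShortComplex C) (hS : S.ShortExact) (hT : T.ShortExact)
    (f' : S.X₁ ⟶ T.X₁) (f'' : S.X₃ ⟶ T.X₃) :
    (∃ f : S.X₂ ⟶ T.X₂, S.f ≫ f = f' ≫ T.f ∧ f ≫ T.g = S.g ≫ f'') ↔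
      hS.extClass.comp (Ext.mk₀ f') (add_zero 1) =
        (Ext.mk₀ f'').comp hT.extClass (zero_add 1) := by
  letI := HasDerivedCategory.standard C
  constructor
  · rintro ⟨f, h₁, h₂⟩
    ext
    rw [Ext.comp_hom, Ext.comp_hom, Ext.mk₀_hom, Ext.mk₀_hom,
      hS.extClass_hom, hT.extClass_hom, ShiftedHom.comp_mk₀, ShiftedHom.mk₀_comp]
    exact GlueAux.singleδ_naturality hS hT f' f f'' h₁ h₂.symm
  · intro h
    have h' : hS.singleδ ≫ ((singleFunctor C 0).map f')⟦(1 : ℤ)⟧' =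
        (singleFunctor C 0).map f'' ≫ hT.singleδ := by
      have h2 : (hS.extClass.comp (Ext.mk₀ f') (add_zero 1)).hom =
          ((Ext.mk₀ f'').comp hT.extClass (zero_add 1)).hom := by rw [h]
      rwa [Ext.comp_hom, Ext.comp_hom, Ext.mk₀_hom, Ext.mk₀_hom,
        hS.extClass_hom, hT.extClass_hom, ShiftedHom.comp_mk₀, ShiftedHom.mk₀_comp] at h2
    obtain ⟨(b : (singleFunctor C 0).obj S.X₂ ⟶ (singleFunctor C 0).obj T.X₂), hb₁, hb₂⟩ := Pretriangulated.complete_distinguished_triangle_morphism₂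
      hS.singleTriangle hT.singleTriangle
      hS.singleTriangle_distinguished hT.singleTriangle_distinguished
      ((singleFunctor C 0).map f') ((singleFunctor C 0).map f'') h'
    replace hb₁ : (singleFunctor C 0).map S.f ≫ b =
        (singleFunctor C 0).map f' ≫ (singleFunctor C 0).map T.f := hb₁
    replace hb₂ : (singleFunctor C 0).map S.g ≫ (singleFunctor C 0).map f'' =
        b ≫ (singleFunctor C 0).map T.g := hb₂
    let H := homologyFunctor C 0
    let ι : singleFunctor C 0 ⋙ H ≅ 𝟭 C := GlueAux.singleCompHomologyIso
    refine ⟨ι.inv.app S.X₂ ≫ H.map b ≫ ι.hom.app T.X₂, ?_, ?_⟩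
    · have n1 : S.f ≫ ι.inv.app S.X₂ =
          ι.inv.app S.X₁ ≫ H.map ((singleFunctor C 0).map S.f) := by
        simpa using ι.inv.naturality S.f
      have n2 : ι.inv.app S.X₁ ≫ H.map ((singleFunctor C 0).map f') =
          f' ≫ ι.inv.app T.X₁ := by
        simpa using (ι.inv.naturality f').symm
      have n3 : H.map ((singleFunctor C 0).map T.f) ≫ ι.hom.app T.X₂ =
          ι.hom.app T.X₁ ≫ T.f := by
        simpa using ι.hom.naturality T.f
      rw [← assoc, n1, assoc, ← Functor.map_comp_assoc, hb₁, Functor.map_comp, assoc, n3,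
        ← assoc, ← assoc, n2, assoc, assoc, Iso.inv_hom_id_app_assoc]
    · have m1 : ι.hom.app T.X₂ ≫ T.g =
          H.map ((singleFunctor C 0).map T.g) ≫ ι.hom.app T.X₃ := by
        have := ι.hom.naturality T.g
        simpa using this.symm
      have m2 : H.map ((singleFunctor C 0).map f'') ≫ ι.hom.app T.X₃ =
          ι.hom.app S.X₃ ≫ f'' := by
        simpa using ι.hom.naturality f''
      have m3 : ι.inv.app S.X₂ ≫ H.map ((singleFunctor C 0).map S.g) =
          S.g ≫ ι.inv.app S.X₃ := by
        simpa using (ι.inv.naturality S.g).symm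
      rw [assoc, assoc, m1, ← Functor.map_comp_assoc, ← hb₂, Functor.map_comp_assoc,
        m2, ← assoc, ← assoc, m3, assoc, assoc, Iso.inv_hom_id_app_assoc]
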